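/- For a real diagonal m×m matrix R, the matrix Δ(cosh R, sinh R) is a Bogoliubov matrix, and equals the matrix exponential exp(Δ(0,R)). -/

import Mathlib

open Matrix

noncomputable section

/-- Doubled-up matrix `Δ(E₋,E₊)`. -/
def dbl {R K : Type*} (Em Ep : Matrix R K ℂ) : Matrix (R ⊕ R) (K ⊕ K) ℂ :=
  Matrix.fromBlocks Em Ep (Ep.map (starRingEnd ℂ)) (Em.map (starRingEnd ℂ))

/-- The matrix `J = diag(I, -I)`. -/
def Jm (N : Type*) [DecidableEq N] : Matrix (N ⊕ N) (N ⊕ N) ℂ :=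
  Matrix.fromBlocks 1 0 0 (-1)

/-- The `♭` involution `X^♭ = J Xᴴ J`. -/
def flatB {N M : Type*} [Fintype N] [DecidableEq N] [Fintype M] [DecidableEq M]
    (X : Matrix (N ⊕ N) (M ⊕ M) ℂ) : Matrix (M ⊕ M) (N ⊕ N) ℂ :=
  Jm M * Xᴴ * Jm N

/-- Bogoliubov matrix: doubled-up and `♭`-unitary. -/
def IsBog {N : Type*} [Fintype N] [DecidableEq N]
    (S : Matrix (N ⊕ N) (N ⊕ N) ℂ) : Prop :=
  (∃ Sm Sp, S = dbl Sm Sp) ∧ flatB S * S = 1 ∧ S * flatB S = 1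

lemma map_conj_diag_real {m : Type*} [DecidableEq m] (f : m → ℝ) :
    (Matrix.diagonal fun i => (f i : ℂ)).map (starRingEnd ℂ) =
      Matrix.diagonal fun i => (f i : ℂ) := by
  rw [Matrix.diagonal_map (map_zero _)]
  exact congrArg _ (funext fun i => Complex.conj_ofReal _)

lemma conj_blocks {m : Type*} [Fintype m] [DecidableEq m] (A B : Matrix m m ℂ) :
    (Matrix.fromBlocks 1 1 1 (-1) : Matrix (m ⊕ m) (m ⊕ m) ℂ) * Matrix.fromBlocks A 0 0 B *
      Matrix.fromBlocks 1 1 1 (-1) =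
    Matrix.fromBlocks (A + B) (A - B) (A - B) (A + B) := by
  rw [Matrix.fromBlocks_multiply, Matrix.fromBlocks_multiply]
  simp [Matrix.mul_neg, sub_eq_add_neg]

theorem bog_of_diag_cosh_sinh {m : Type*} [Fintype m] [DecidableEq m] (d : m → ℝ) :
    IsBog (dbl (Matrix.diagonal fun i => (Real.cosh (d i) : ℂ))
              (Matrix.diagonal fun i => (Real.sinh (d i) : ℂ))) ∧
    dbl (Matrix.diagonal fun i => (Real.cosh (d i) : ℂ))
        (Matrix.diagonal fun i => (Real.sinh (d i) : ℂ)) =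
      NormedSpace.exp (dbl (0 : Matrix m m ℂ) (Matrix.diagonal fun i => (d i : ℂ))) := by
  set C : Matrix m m ℂ := Matrix.diagonal fun i => (Real.cosh (d i) : ℂ) with hCdef
  set S : Matrix m m ℂ := Matrix.diagonal fun i => (Real.sinh (d i) : ℂ) with hSdef
  set D : Matrix m m ℂ := Matrix.diagonal fun i => (d i : ℂ) with hDdef
  have hCmap : C.map (starRingEnd ℂ) = C := map_conj_diag_real _
  have hSmap : S.map (starRingEnd ℂ) = S := map_conj_diag_real _
  have hCH : Cᴴ = C := by
    rw [hCdef, Matrix.diagonal_conjTranspose]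
    exact congrArg _ (funext fun i => Complex.conj_ofReal _)
  have hSH : Sᴴ = S := by
    rw [hSdef, Matrix.diagonal_conjTranspose]
    exact congrArg _ (funext fun i => Complex.conj_ofReal _)
  have hdbl : dbl C S = Matrix.fromBlocks C S S C := by
    rw [dbl, hCmap, hSmap]
  have hCS : C * S = S * C := by
    rw [hCdef, hSdef, Matrix.diagonal_mul_diagonal, Matrix.diagonal_mul_diagonal]
    exact congrArg _ (funext fun i => mul_comm _ _)
  have hC2S2 : C * C - S * S = 1 := by
    rw [hCdef, hSdef, Matrix.diagonal_mul_diagonal, Matrix.diagonal_mul_diagonal,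
      Matrix.diagonal_sub, ← Matrix.diagonal_one]
    refine congrArg _ (funext fun i => ?_)
    rw [← Complex.ofReal_mul, ← Complex.ofReal_mul, ← Complex.ofReal_sub,
      ← Complex.ofReal_one, Complex.ofReal_inj]
    nlinarith [Real.cosh_sq_sub_sinh_sq (d i)]
  have hflat : flatB (Matrix.fromBlocks C S S C) = Matrix.fromBlocks C (-S) (-S) C := by
    simp [flatB, Jm, Matrix.fromBlocks_conjTranspose, Matrix.fromBlocks_multiply, hCH, hSH]
  constructor
  · refine ⟨⟨C, S, rfl⟩, ?_, ?_⟩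
    · rw [hdbl, hflat, Matrix.fromBlocks_multiply, ← Matrix.fromBlocks_one]
      simp only [Matrix.neg_mul, ← sub_eq_add_neg, neg_add_eq_sub]
      rw [hC2S2, hCS, sub_self]
    · rw [hdbl, hflat, Matrix.fromBlocks_multiply, ← Matrix.fromBlocks_one]
      simp only [Matrix.mul_neg, ← sub_eq_add_neg, neg_add_eq_sub]
      rw [hCS, hC2S2, sub_self]
  · -- exponential part
    have hdbl0 : dbl (0 : Matrix m m ℂ) D = Matrix.fromBlocks 0 D D 0 := by
      rw [dbl, hDdef, map_conj_diag_real, Matrix.map_zero _ (map_zero _)]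
    set U : Matrix (m ⊕ m) (m ⊕ m) ℂ := Matrix.fromBlocks 1 1 1 (-1) with hUdef
    have hUU : U * U = (2:ℂ) • 1 := by
      rw [hUdef, Matrix.fromBlocks_multiply, ← Matrix.fromBlocks_one, Matrix.fromBlocks_smul]
      congr 1 <;> simp [two_smul]
    have hUr : U * ((2:ℂ)⁻¹ • U) = 1 := by
      rw [mul_smul_comm, hUU, smul_smul]; norm_num
    have hUl : ((2:ℂ)⁻¹ • U) * U = 1 := by
      rw [smul_mul_assoc, hUU, smul_smul]; norm_num
    have hUunit : IsUnit U := ⟨⟨U, (2:ℂ)⁻¹ • U, hUr, hUl⟩, rfl⟩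
    have hUinv : U⁻¹ = (2:ℂ)⁻¹ • U := Matrix.inv_eq_right_inv hUr
    set w : m ⊕ m → ℂ := Sum.elim (fun i => (d i : ℂ)) (fun i => -(d i : ℂ)) with hwdef
    have hnegD : (Matrix.diagonal fun i => -((d i : ℂ))) = -D := by
      rw [hDdef]; exact (Matrix.diagonal_neg (fun i => ((d i : ℝ) : ℂ))).symm
    have hconj : U * Matrix.diagonal w * U⁻¹ = dbl 0 D := by
      rw [hUinv, hwdef, ← Matrix.fromBlocks_diagonal, mul_smul_comm, hUdef, conj_blocks,
        hnegD, ← hDdef, hdbl0, Matrix.fromBlocks_smul, Matrix.fromBlocks_inj]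
      refine ⟨by module, by module, by module, by module⟩
    have hexp : NormedSpace.exp (dbl (0 : Matrix m m ℂ) D) =
        U * Matrix.diagonal (fun i => Complex.exp (w i)) * U⁻¹ := by
      rw [← hconj, Matrix.exp_conj U _ hUunit, Matrix.exp_diagonal]
      rw [Pi.exp_def]
      congr 2
      funext i
      rw [← Complex.exp_eq_exp_ℂ]
    set Ep : Matrix m m ℂ := Matrix.diagonal fun i => Complex.exp (d i) with hEpdef
    set En : Matrix m m ℂ := Matrix.diagonal fun i => Complex.exp (-(d i : ℂ)) with hEndef
    have hsplit : (Matrix.diagonal fun i : m ⊕ m => Complex.exp (w i)) =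
        Matrix.fromBlocks Ep 0 0 En := by
      rw [hEpdef, hEndef, Matrix.fromBlocks_diagonal]
      refine congrArg _ (funext fun i => ?_)
      cases i <;> simp [hwdef]
    have hCexp : C = (2:ℂ)⁻¹ • (Ep + En) := by
      rw [hCdef, hEpdef, hEndef, Matrix.diagonal_add, ← Matrix.diagonal_smul]
      refine congrArg _ (funext fun i => ?_)
      simp only [Pi.smul_apply, smul_eq_mul, Real.cosh_eq]
      push_cast
      ring
    have hSexp : S = (2:ℂ)⁻¹ • (Ep - En) := by
      rw [hSdef, hEpdef, hEndef, Matrix.diagonal_sub, ← Matrix.diagonal_smul]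
      refine congrArg _ (funext fun i => ?_)
      simp only [Pi.smul_apply, smul_eq_mul, Real.sinh_eq]
      push_cast
      ring
    rw [hexp, hsplit, hUinv, hdbl, mul_smul_comm, hUdef, conj_blocks,
      Matrix.fromBlocks_smul, hCexp, hSexp]
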